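/- Let A₀, B₀, D₀, A₁, B₁, D₁, P⁺, P⁻ be complex k×k matrices satisfying the DN equations on [0,1]: P⁻·A₁ = A₀·P⁻, P⁺·D₀ = D₁·P⁺, B₀ = P⁻·P⁺ + A₀·D₀, B₁ = P⁺·P⁻ + D₁·A₁, and suppose P⁻ is invertible. Fix η, ζ ∈ ℂ with η ≠ 0. If row vectors g₀, g₁ ∈ ℂᵏ satisfy g₁·M₁(η,ζ) = 0 and η·g₀·P⁻ + g₁·(ζ·I + D₁) = 0, then g₁·P⁺ = g₀·(η·A₀ + I) and g₀·M₀(η,ζ) = 0. -/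

import Mathlib

open Matrix

private lemma vms {k : ℕ} (a : ℂ) (v : Fin k → ℂ) (M : Matrix (Fin k) (Fin k) ℂ) :
    v ᵥ* (a • M) = a • (v ᵥ* M) := by
  ext j
  simp [Matrix.vecMul, dotProduct, Finset.mul_sum, mul_left_comm]

theorem stmt8 (k : ℕ) (hk : 1 ≤ k)
    (A0 B0 D0 A1 B1 D1 Pp Pm : Matrix (Fin k) (Fin k) ℂ)
    (h1 : Pm * A1 = A0 * Pm) (h2 : Pp * D0 = D1 * Pp)
    (h3 : B0 = Pm * Pp + A0 * D0) (h4 : B1 = Pp * Pm + D1 * A1)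
    (hPm : IsUnit Pm)
    (η ζ : ℂ) (hη : η ≠ 0) (g0 g1 : Fin k → ℂ)
    (hg1 : g1 ᵥ* ((η * ζ) • A1 + η • B1 + ζ • (1 : Matrix (Fin k) (Fin k) ℂ) + D1) = 0)
    (hW : η • (g0 ᵥ* Pm) + g1 ᵥ* (ζ • (1 : Matrix (Fin k) (Fin k) ℂ) + D1) = 0) :
    g1 ᵥ* Pp = g0 ᵥ* (η • A0 + 1) ∧
      g0 ᵥ* ((η * ζ) • A0 + η • B0 + ζ • (1 : Matrix (Fin k) (Fin k) ℂ) + D0) = 0 := by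
  obtain ⟨u, hu⟩ := hPm
  set Q : Matrix (Fin k) (Fin k) ℂ := ↑u⁻¹ with hQ
  have hPQ : Pm * Q = 1 := by rw [hQ, ← hu]; exact u.mul_inv
  -- hW rearranged
  have hW' : g1 ᵥ* (ζ • (1 : Matrix (Fin k) (Fin k) ℂ) + D1) = -(η • (g0 ᵥ* Pm)) := by
    linear_combination (norm := module) hW
  -- factorization of M1
  have e1 : (η * ζ) • A1 + η • B1 + ζ • (1 : Matrix (Fin k) (Fin k) ℂ) + D1
      = η • (Pp * Pm) + (ζ • (1 : Matrix (Fin k) (Fin k) ℂ) + D1) * (η • A1 + 1) := by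
    rw [h4]
    simp only [mul_add, add_mul, smul_add, Matrix.mul_smul, Matrix.smul_mul, smul_smul,
      Matrix.one_mul, Matrix.mul_one, mul_comm ζ η]
    abel
  have e0 : (η * ζ) • A0 + η • B0 + ζ • (1 : Matrix (Fin k) (Fin k) ℂ) + D0
      = η • (Pm * Pp) + (η • A0 + 1) * (ζ • (1 : Matrix (Fin k) (Fin k) ℂ) + D0) := by
    rw [h3]
    simp only [mul_add, add_mul, smul_add, Matrix.mul_smul, Matrix.smul_mul, smul_smul,
      Matrix.one_mul, Matrix.mul_one, mul_comm ζ η]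
    abel
  have key : η • ((g1 ᵥ* Pp) ᵥ* Pm) = η • ((g0 ᵥ* (η • A0 + 1)) ᵥ* Pm) := by
    have h := hg1
    rw [e1] at h
    rw [vecMul_add, vms, ← vecMul_vecMul, ← vecMul_vecMul, hW'] at h
    have hc : Pm * (η • A1 + 1) = (η • A0 + 1) * Pm := by
      rw [mul_add, add_mul, Matrix.mul_smul, h1, Matrix.smul_mul, Matrix.mul_one,
        Matrix.one_mul]
    rw [Matrix.neg_vecMul, smul_vecMul] at h
    have : η • ((g1 ᵥ* Pp) ᵥ* Pm) = η • ((g0 ᵥ* Pm) ᵥ* (η • A1 + 1)) := by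
      linear_combination (norm := module) h
    rw [this, vecMul_vecMul, hc, ← vecMul_vecMul]
  have key2 : (g1 ᵥ* Pp) ᵥ* Pm = (g0 ᵥ* (η • A0 + 1)) ᵥ* Pm :=
    smul_right_injective _ hη key
  have first : g1 ᵥ* Pp = g0 ᵥ* (η • A0 + 1) := by
    have := congrArg (fun v => v ᵥ* Q) key2
    simpa [vecMul_vecMul, mul_assoc, hPQ] using this
  refine ⟨first, ?_⟩
  have hc2 : Pp * (ζ • (1 : Matrix (Fin k) (Fin k) ℂ) + D0)
      = (ζ • (1 : Matrix (Fin k) (Fin k) ℂ) + D1) * Pp := by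
    rw [mul_add, add_mul, Matrix.mul_smul, h2, Matrix.smul_mul, Matrix.mul_one,
      Matrix.one_mul]
  rw [e0, vecMul_add, vms]
  have t : g0 ᵥ* ((η • A0 + 1) * (ζ • (1 : Matrix (Fin k) (Fin k) ℂ) + D0))
      = (-(η • (g0 ᵥ* Pm))) ᵥ* Pp := by
    rw [← vecMul_vecMul, ← first, vecMul_vecMul, hc2, ← vecMul_vecMul, hW']
  rw [t, Matrix.neg_vecMul, smul_vecMul, vecMul_vecMul]
  module
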